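/- There is no C² function u : ℝ² → ℝ satisfying the modified elliptic Liouville equation u_xx + u_yy - exp(2u) = 0 at every point of the plane; i.e., the equation ∇²u = exp(2u) possesses no solution valid in the entire plane ℝ². -/

import Mathlib

open Filter Topology

lemma sd_test {g : ℝ → ℝ} {x : ℝ}
    (hg : ∀ᶠ t in 𝓝 x, DifferentiableAt ℝ g t)
    (hg' : DifferentiableAt ℝ (deriv g) x)
    (hmax : IsLocalMax g x) : deriv (deriv g) x ≤ 0 := by
  by_contra hpos
  push_neg at hpos
  have h0 : deriv g x = 0 := hmax.deriv_eq_zero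
  have hslope := hasDerivAt_iff_tendsto_slope.1 hg'.hasDerivAt
  have hev : ∀ᶠ t in 𝓝[>] x, 0 < deriv g t := by
    have h1 : ∀ᶠ t in 𝓝[≠] x, 0 < slope (deriv g) x t :=
      hslope (Ioi_mem_nhds hpos)
    have h2 : ∀ᶠ t in 𝓝[>] x, 0 < slope (deriv g) x t :=
      h1.filter_mono (nhdsWithin_mono x fun t ht => ne_of_gt ht)
    filter_upwards [h2, self_mem_nhdsWithin] with t ht ht'
    have hx : 0 < t - x := sub_pos.2 ht'
    have : 0 < (deriv g t - deriv g x) / (t - x) := by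
      simpa [slope_def_field, div_eq_iff, h0] using ht
    nlinarith [mul_pos this hx, (div_mul_cancel₀ (deriv g t - deriv g x) (ne_of_gt hx))]
  obtain ⟨b, hb, hIoo⟩ := (mem_nhdsGT_iff_exists_Ioo_subset).1 hev
  obtain ⟨ε, hε, hball⟩ := Metric.mem_nhds_iff.1 ((hg.and hmax).filter_mono le_rfl)
  set c : ℝ := min b (x + ε/2) with hc
  have hxc : x < c := lt_min hb (by linarith)
  have hsub : Set.Icc x c ⊆ Metric.ball x ε := by
    intro t ht
    simp only [Metric.mem_ball, Real.dist_eq, abs_lt]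
    constructor
    · linarith [ht.1]
    · have := ht.2
      have : t ≤ x + ε/2 := le_trans this (min_le_right _ _)
      linarith
  have hmono : StrictMonoOn g (Set.Icc x c) := by
    apply strictMonoOn_of_deriv_pos (convex_Icc x c)
    · intro t ht
      exact ((hball (hsub ht)).1).continuousAt.continuousWithinAt
    · intro t ht
      rw [interior_Icc] at ht
      exact hIoo ⟨ht.1, lt_of_lt_of_le ht.2 (min_le_left _ _)⟩
  have h1 : g x < g c := hmono (Set.left_mem_Icc.2 hxc.le) (Set.right_mem_Icc.2 hxc.le) hxc
  have h2 : g c ≤ g x := (hball (hsub (Set.right_mem_Icc.2 hxc.le))).2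
  linarith

lemma vhasderiv (K c : ℝ) : ∀ x : ℝ, 0 < c - x^2 →
    HasDerivAt (fun t => K - Real.log (c - t^2)) (2*x/(c - x^2)) x := by
  intro x hx
  have h1 : HasDerivAt (fun t : ℝ => c - t^2) (-(2*x)) x := by
    simpa using ((hasDerivAt_pow 2 x).const_sub c)
  have h2 := (Real.hasDerivAt_log (ne_of_gt hx)).comp x h1
  have h3 := h2.const_sub K
  convert h3 using 1
  · rfl
  · rfl
  · rfl
  field_simp

lemma vslice (K c a : ℝ) (h : 0 < c - a^2) :
    (∀ᶠ t in 𝓝 a, DifferentiableAt ℝ (fun x => K - Real.log (c - x^2)) t) ∧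
    DifferentiableAt ℝ (deriv (fun x => K - Real.log (c - x^2))) a ∧
    deriv (deriv (fun x => K - Real.log (c - x^2))) a
      = (2*(c - a^2) + 4*a^2)/((c - a^2)^2) := by
  have hU : IsOpen {x : ℝ | 0 < c - x^2} :=
    isOpen_lt continuous_const (by continuity)
  have hmem : {x : ℝ | 0 < c - x^2} ∈ 𝓝 a := hU.mem_nhds h
  have hev : ∀ᶠ t in 𝓝 a, 0 < c - t^2 := hmem
  have hdiff : ∀ᶠ t in 𝓝 a, DifferentiableAt ℝ (fun x => K - Real.log (c - x^2)) t := by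
    filter_upwards [hev] with t ht
    exact (vhasderiv K c t ht).differentiableAt
  have heq : deriv (fun x => K - Real.log (c - x^2)) =ᶠ[𝓝 a] fun x => 2*x/(c - x^2) := by
    filter_upwards [hev] with t ht
    exact (vhasderiv K c t ht).deriv
  have hq : HasDerivAt (fun x : ℝ => 2*x/(c - x^2))
      ((2*(c - a^2) - (2*a)*(-(2*a)))/((c - a^2)^2)) a := by
    have hnum : HasDerivAt (fun x : ℝ => 2*x) 2 a := by
      simpa using (hasDerivAt_id a).const_mul 2
    have hden : HasDerivAt (fun x : ℝ => c - x^2) (-(2*a)) a := by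
      simpa using ((hasDerivAt_pow 2 a).const_sub c)
    have := hnum.div hden (ne_of_gt h)
    convert this using 1
    · rfl
    · rfl
    · rfl
  refine ⟨hdiff, ?_, ?_⟩
  · exact (heq.differentiableAt_iff).2 hq.differentiableAt
  · rw [heq.deriv_eq, hq.deriv]
    ring

lemma uline_props {g : ℝ → ℝ} (hg : ContDiff ℝ 2 g) :
    Differentiable ℝ g ∧ Differentiable ℝ (deriv g) := by
  have h : ContDiff ℝ ((1 : ℕ) + 1) g := by
    convert hg using 2
    norm_num
  rw [contDiff_succ_iff_deriv] at h
  exact ⟨h.1, h.2.2.differentiable (by norm_num)⟩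

/-- Second derivative bound for a slice `u-line minus comparison`. -/
lemma slice_ineq {f : ℝ → ℝ} (hf : ContDiff ℝ 2 f) (K c a : ℝ) (h : 0 < c - a^2)
    (hmax : IsLocalMax (fun x => f x - (K - Real.log (c - x^2))) a) :
    deriv (deriv f) a ≤ (2*(c - a^2) + 4*a^2)/((c - a^2)^2) := by
  obtain ⟨hVd, hVd', hVdd⟩ := vslice K c a h
  obtain ⟨hfd, hfd'⟩ := uline_props hf
  set V : ℝ → ℝ := fun x => K - Real.log (c - x^2) with hV
  set g : ℝ → ℝ := fun x => f x - V x with hg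
  have hgd : ∀ᶠ t in 𝓝 a, DifferentiableAt ℝ g t := by
    filter_upwards [hVd] with t ht
    exact (hfd t).sub ht
  have hderiv_eq : deriv g =ᶠ[𝓝 a] fun t => deriv f t - deriv V t := by
    filter_upwards [hVd] with t ht
    exact deriv_sub (hfd t) ht
  have hdiff2 : DifferentiableAt ℝ (fun t => deriv f t - deriv V t) a :=
    (hfd' a).sub hVd'
  have hgd' : DifferentiableAt ℝ (deriv g) a :=
    (hderiv_eq.differentiableAt_iff).2 hdiff2
  have hdd : deriv (deriv g) a = deriv (deriv f) a - deriv (deriv V) a := by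
    rw [hderiv_eq.deriv_eq, deriv_fun_sub (hfd' a) hVd']
  have := sd_test hgd hgd' hmax
  rw [hdd, hVdd] at this
  linarith

/-- There is no C² function `u : ℝ² → ℝ` satisfying the modified elliptic
Liouville equation `u_xx + u_yy - exp(2u) = 0` at every point of the plane. -/
theorem modified_liouville_no_global_solution :
    ¬ ∃ u : ℝ × ℝ → ℝ, ContDiff ℝ 2 u ∧
      ∀ x y : ℝ,
        deriv (deriv (fun x' : ℝ => u (x', y))) x
          + deriv (deriv (fun y' : ℝ => u (x, y'))) y
          - Real.exp (2 * u (x, y)) = 0 := by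
  rintro ⟨u, hu, hpde⟩
  set a0 : ℝ := u (0, 0) with ha0
  set R : ℝ := 3 * Real.exp (-a0) with hRdef
  have hRpos : 0 < R := by positivity
  set S : Set (ℝ × ℝ) := {p | p.1 ^ 2 + p.2 ^ 2 ≤ R ^ 2} with hSdef
  have hScl : IsClosed S :=
    isClosed_le ((continuous_fst.pow 2).add (continuous_snd.pow 2)) continuous_const
  have hSbd : S ⊆ Metric.closedBall 0 R := by
    intro p hp
    simp only [hSdef, Set.mem_setOf_eq] at hp
    simp only [Metric.mem_closedBall, Prod.dist_eq, Prod.fst_zero, Prod.snd_zero,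
      Real.dist_eq, sub_zero, max_le_iff]
    have h1 : p.1 ^ 2 ≤ R ^ 2 := by nlinarith [sq_nonneg p.2, hp]
    have h2 : p.2 ^ 2 ≤ R ^ 2 := by nlinarith [sq_nonneg p.1, hp]
    constructor
    · rw [← Real.sqrt_sq hRpos.le, ← Real.sqrt_sq_eq_abs]; exact Real.sqrt_le_sqrt h1
    · rw [← Real.sqrt_sq hRpos.le, ← Real.sqrt_sq_eq_abs]; exact Real.sqrt_le_sqrt h2
  have hScpt : IsCompact S := (isCompact_closedBall 0 R).of_isClosed_subset hScl hSbd
  set Φ : ℝ × ℝ → ℝ := fun p => (R ^ 2 - p.1 ^ 2 - p.2 ^ 2) * Real.exp (u p) with hΦdef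
  have hΦcont : Continuous Φ :=
    (((continuous_const.sub (continuous_fst.pow 2)).sub (continuous_snd.pow 2))).mul
      (Real.continuous_exp.comp hu.continuous)
  have hS0 : ((0 : ℝ), (0 : ℝ)) ∈ S := by
    simp only [hSdef, Set.mem_setOf_eq]
    norm_num
    positivity
  obtain ⟨p0, hp0S, hp0max⟩ := hScpt.exists_isMaxOn ⟨((0 : ℝ), (0 : ℝ)), hS0⟩
    hΦcont.continuousOn
  have hΦ0 : Φ (0, 0) = R ^ 2 * Real.exp a0 := by
    simp only [hΦdef, ← ha0]
    norm_num
  have hΦ0gt : 2 * R < Φ (0, 0) := by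
    rw [hΦ0, hRdef]
    have he : 0 < Real.exp (-a0) := Real.exp_pos _
    have : (3 * Real.exp (-a0)) ^ 2 * Real.exp a0 = 9 * Real.exp (-a0) := by
      rw [mul_pow]
      have : Real.exp (-a0) ^ 2 * Real.exp a0 = Real.exp (-a0) := by
        rw [sq, mul_assoc, ← Real.exp_add]
        simp
      nlinarith [this]
    rw [this]
    nlinarith
  have hΦp0 : 2 * R < Φ p0 := lt_of_lt_of_le hΦ0gt (hp0max hS0)
  have hf0 : 0 < R ^ 2 - p0.1 ^ 2 - p0.2 ^ 2 := by
    by_contra hle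
    push_neg at hle
    have : Φ p0 ≤ 0 := mul_nonpos_of_nonpos_of_nonneg hle (Real.exp_pos _).le
    nlinarith
  -- open disk
  set D : Set (ℝ × ℝ) := {p | p.1 ^ 2 + p.2 ^ 2 < R ^ 2} with hDdef
  have hDopen : IsOpen D :=
    isOpen_lt ((continuous_fst.pow 2).add (continuous_snd.pow 2)) continuous_const
  have hp0D : p0 ∈ D := by
    simp only [hDdef, Set.mem_setOf_eq]
    linarith
  -- local max of w
  set w : ℝ × ℝ → ℝ :=
    fun p => u p - (Real.log (2 * R) - Real.log (R ^ 2 - p.1 ^ 2 - p.2 ^ 2)) with hwdef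
  have hwmax : IsLocalMax w p0 := by
    filter_upwards [hDopen.mem_nhds hp0D] with p hp
    have hfp : 0 < R ^ 2 - p.1 ^ 2 - p.2 ^ 2 := by
      simp only [hDdef, Set.mem_setOf_eq] at hp
      linarith
    have hpS : p ∈ S := by
      simp only [hDdef, Set.mem_setOf_eq] at hp
      simp only [hSdef, Set.mem_setOf_eq]
      linarith
    have hΦle : Φ p ≤ Φ p0 := hp0max hpS
    have hlog : Real.log (Φ p) ≤ Real.log (Φ p0) := by
      apply Real.log_le_log _ hΦle
      positivity
    have e1 : Real.log (Φ p) = Real.log (R ^ 2 - p.1 ^ 2 - p.2 ^ 2) + u p := by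
      rw [hΦdef]
      rw [Real.log_mul (ne_of_gt hfp) (Real.exp_ne_zero _), Real.log_exp]
    have e2 : Real.log (Φ p0) = Real.log (R ^ 2 - p0.1 ^ 2 - p0.2 ^ 2) + u p0 := by
      rw [hΦdef]
      rw [Real.log_mul (ne_of_gt hf0) (Real.exp_ne_zero _), Real.log_exp]
    simp only [hwdef]
    rw [e1, e2] at hlog
    linarith
  -- slices
  set a : ℝ := p0.1 with hadef
  set b : ℝ := p0.2 with hbdef
  have hp0eq : p0 = (a, b) := by simp [hadef, hbdef]
  -- x-slice
  have hfx : ContDiff ℝ 2 (fun x : ℝ => u (x, b)) :=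
    hu.comp (contDiff_id.prodMk contDiff_const)
  have hfy : ContDiff ℝ 2 (fun y : ℝ => u (a, y)) :=
    hu.comp (contDiff_const.prodMk contDiff_id)
  have hca : 0 < (R ^ 2 - b ^ 2) - a ^ 2 := by linarith
  have hcb : 0 < (R ^ 2 - a ^ 2) - b ^ 2 := by linarith
  have hmaxx : IsLocalMax
      (fun x : ℝ => u (x, b) - (Real.log (2 * R) - Real.log ((R ^ 2 - b ^ 2) - x ^ 2))) a := by
    have hcomp : IsLocalMax (w ∘ fun x : ℝ => (x, b)) a := by
      apply IsLocalMax.comp_continuous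
      · rw [← hp0eq]; exact hwmax
      · exact (continuous_id.prodMk continuous_const).continuousAt
    have : (w ∘ fun x : ℝ => (x, b)) =
        fun x : ℝ => u (x, b) - (Real.log (2 * R) - Real.log ((R ^ 2 - b ^ 2) - x ^ 2)) := by
      funext x
      simp only [Function.comp, hwdef]
      ring_nf
    rwa [this] at hcomp
  have hmaxy : IsLocalMax
      (fun y : ℝ => u (a, y) - (Real.log (2 * R) - Real.log ((R ^ 2 - a ^ 2) - y ^ 2))) b := by
    have hcomp : IsLocalMax (w ∘ fun y : ℝ => (a, y)) b := by
      apply IsLocalMax.comp_continuous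
      · rw [← hp0eq]; exact hwmax
      · exact (continuous_const.prodMk continuous_id).continuousAt
    have : (w ∘ fun y : ℝ => (a, y)) =
        fun y : ℝ => u (a, y) - (Real.log (2 * R) - Real.log ((R ^ 2 - a ^ 2) - y ^ 2)) := by
      funext y
      simp only [Function.comp, hwdef]
    rwa [this] at hcomp
  have hx := slice_ineq hfx (Real.log (2 * R)) (R ^ 2 - b ^ 2) a hca hmaxx
  have hy := slice_ineq hfy (Real.log (2 * R)) (R ^ 2 - a ^ 2) b hcb hmaxy
  -- PDE at (a, b)
  have hpde' := hpde a b
  set f : ℝ := R ^ 2 - a ^ 2 - b ^ 2 with hfdef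
  have hfpos : 0 < f := by simp only [hfdef]; linarith
  have hxa : R ^ 2 - b ^ 2 - a ^ 2 = f := by rw [hfdef]; ring
  rw [hxa] at hx
  have hsum : Real.exp (2 * u (a, b)) ≤ 4 * R ^ 2 / f ^ 2 := by
    have hsum' : deriv (deriv (fun x' : ℝ => u (x', b))) a
        + deriv (deriv (fun y' : ℝ => u (a, y'))) b = Real.exp (2 * u (a, b)) := by
      linarith
    have h4 : (2 * f + 4 * a ^ 2) / f ^ 2 + (2 * f + 4 * b ^ 2) / f ^ 2
        = 4 * R ^ 2 / f ^ 2 := by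
      rw [← add_div]
      congr 1
      simp only [hfdef]
      ring
    calc Real.exp (2 * u (a, b)) = _ := hsum'.symm
      _ ≤ (2 * f + 4 * a ^ 2) / f ^ 2 + (2 * f + 4 * b ^ 2) / f ^ 2 := add_le_add hx hy
      _ = 4 * R ^ 2 / f ^ 2 := h4
  -- conclude
  have hup0 : u p0 = u (a, b) := by rw [hp0eq]
  have hexp2 : Real.exp (2 * u (a, b)) = Real.exp (u (a, b)) ^ 2 := by
    rw [sq, ← Real.exp_add, two_mul]
  have hΦp0eq : Φ p0 = f * Real.exp (u (a, b)) := by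
    rw [hΦdef]
  have hkey : f * Real.exp (u (a, b)) ≤ 2 * R := by
    have he : 0 < Real.exp (u (a, b)) := Real.exp_pos _
    have hsq : (f * Real.exp (u (a, b))) ^ 2 ≤ (2 * R) ^ 2 := by
      rw [hexp2] at hsum
      have := (le_div_iff₀ (by positivity : (0:ℝ) < f ^ 2)).1 hsum
      nlinarith
    nlinarith [mul_pos hfpos he]
  rw [hΦp0eq] at hΦp0
  linarith
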